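/- Let Λ be a group, and let p be a Λ-colored partition of [k] ⊔ [l] and q a Λ-colored partition of [l] ⊔ [m]. Suppose (V, V′) is an aligned pair with V ∈ p, V′ ∈ q, max V = max V′ and min V′ ∈ V, and let p′ be obtained from p by splitting V at min V′ into V_l and V_r, recoloring col′(V_r) := col_q(V′)⁻¹ and col′(V_l) := col_p(V) · col_q(V′) · g⁻¹, where g is the ordered product of the colors of the relative outer p-blocks lying strictly between max V_l and min V_r. Then for every choice of boundary data, the solution sets of the interval-product systems for the pair (p,q) and for the pair (p′,q) coincide: a tuple x ∈ Λ^l satisfies all block equations of (p,q) if and only if it satisfies all block equations of (p′,q). -/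

import Mathlib

namespace Stmt17

/-- Ordered product `x_a x_{a+1} ⋯ x_b`. -/
def iprod {Λ : Type*} [Monoid Λ] (x : ℕ → Λ) (a b : ℕ) : Λ :=
  ((List.range' a (b + 1 - a)).map x).prod

/-- Half-open product over `[a, b)`. -/
def jprod {Λ : Type*} [Monoid Λ] (x : ℕ → Λ) (a b : ℕ) : Λ :=
  ((List.range' a (b - a)).map x).prod

lemma iprod_eq_jprod {Λ : Type*} [Monoid Λ] (x : ℕ → Λ) (a b : ℕ) :
    iprod x a b = jprod x a (b + 1) := rfl

lemma jprod_append {Λ : Type*} [Monoid Λ] (x : ℕ → Λ) {a m b : ℕ}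
    (h1 : a ≤ m) (h2 : m ≤ b) :
    jprod x a m * jprod x m b = jprod x a b := by
  unfold jprod
  rw [← List.prod_append, ← List.map_append]
  congr 1
  have h := List.range'_append (s := a) (m := m - a) (n := b - m) (step := 1)
  simp only [one_mul] at h
  have e1 : a + (m - a) = m := by omega
  have e2 : (m - a) + (b - m) = b - a := by omega
  rw [e1, e2] at h
  rw [h]

lemma mid {Λ : Type*} [Monoid Λ] (x : ℕ → Λ) :
    ∀ (s : ℕ) (f g : ℕ → ℕ) (a b : ℕ),
    (s = 0 → a = b) →
    (0 < s → f 0 = a) →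
    (0 < s → g (s - 1) + 1 = b) →
    (∀ u, u + 1 < s → g u + 1 = f (u + 1)) →
    (∀ u, u < s → f u ≤ g u) →
    (List.ofFn (fun u : Fin s => jprod x (f u) (g u + 1))).prod = jprod x a b := by
  intro s
  induction s with
  | zero =>
    intro f g a b h0 _ _ _ _
    simp [h0 rfl, jprod]
  | succ s ih =>
    intro f g a b h0 hA hB hchain hlb
    have hmono : ∀ u, u ≤ s → g 0 ≤ g u := by
      intro u hu
      induction u with
      | zero => exact le_refl _
      | succ v ihv =>
        have h1 := hchain v (by omega)
        have h2 := hlb (v + 1) (by omega)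
        have h3 := ihv (by omega)
        omega
    have hb : b = g s + 1 := by
      have := hB (by omega)
      simpa using this.symm
    have ha : a = f 0 := (hA (by omega)).symm
    rw [List.ofFn_succ, List.prod_cons]
    have hrest : (List.ofFn fun u : Fin s =>
        jprod x (f (↑u.succ)) (g (↑u.succ) + 1)).prod = jprod x (g 0 + 1) b := by
      simp only [Fin.val_succ]
      exact ih (fun u => f (u + 1)) (fun u => g (u + 1)) (g 0 + 1) b
        (fun hs => by subst hs; omega)
        (fun hs => (hchain 0 (by omega)).symm)
        (fun hs => by
          have := hB (by omega)
          show g (s - 1 + 1) + 1 = b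
          have e : s - 1 + 1 = s := by omega
          rw [e]; simpa using this)
        (fun u hu => hchain (u + 1) (by omega))
        (fun u hu => hlb (u + 1) (by omega))
    rw [hrest]
    simp only [Fin.val_zero]
    rw [jprod_append x (by have := hlb 0 (by omega); omega)
      (by have := hmono s (le_refl s); omega), ha]

theorem stmt17 {Λ : Type*} [Group Λ] {ι κ : Type*}
    (A B : ι → ℕ) (c : ι → Λ)
    (A' B' : κ → ℕ) (d : κ → Λ)
    (i₀ : ι) (j₀ : κ) (ml : ℕ)
    (hml : A i₀ ≤ ml) (h1 : ml < A' j₀) (h2 : A' j₀ ≤ B i₀) (h3 : B' j₀ = B i₀)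
    (s : ℕ) (W : Fin s → ι)
    (htile0 : s = 0 → ml + 1 = A' j₀)
    (htileA : ∀ h : 0 < s, A (W ⟨0, h⟩) = ml + 1)
    (htileB : ∀ h : 0 < s, B (W ⟨s - 1, by omega⟩) + 1 = A' j₀)
    (htilechain : ∀ (u : ℕ) (h : u + 1 < s), B (W ⟨u, by omega⟩) + 1 = A (W ⟨u + 1, h⟩))
    (htlb : ∀ u, A (W u) ≤ B (W u))
    (hWne : ∀ u, W u ≠ i₀)
    (g : Λ) (hg : g = (List.ofFn fun u => c (W u)).prod)
    (x : ℕ → Λ) :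
    ((∀ i, iprod x (A i) (B i) = c i) ∧ (∀ j, iprod x (A' j) (B' j) = (d j)⁻¹)) ↔
      ((∀ i, i ≠ i₀ → iprod x (A i) (B i) = c i) ∧
        iprod x (A i₀) ml = c i₀ * d j₀ * g⁻¹ ∧
        iprod x (A' j₀) (B i₀) = (d j₀)⁻¹ ∧
        ∀ j, iprod x (A' j) (B' j) = (d j)⁻¹) := by
  classical
  -- the gap product
  set f : ℕ → ℕ := fun u => if h : u < s then A (W ⟨u, h⟩) else 0 with hf
  set g' : ℕ → ℕ := fun u => if h : u < s then B (W ⟨u, h⟩) else 0 with hg'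
  have hofn : ∀ (φ : ι → Λ), (List.ofFn fun u : Fin s => jprod x (f ↑u) (g' ↑u + 1)) =
      (List.ofFn fun u : Fin s => iprod x (A (W u)) (B (W u))) := by
    intro φ
    congr 1
    funext u
    simp only [hf, hg', u.isLt, dif_pos, Fin.eta]
    rfl
  have hmid : (List.ofFn fun u : Fin s => iprod x (A (W u)) (B (W u))).prod
      = jprod x (ml + 1) (A' j₀) := by
    rw [← hofn c]
    apply mid x s f g' (ml + 1) (A' j₀) htile0
    · intro hs; simp only [hf, dif_pos hs]; exact htileA hs
    · intro hs
      have hlt : s - 1 < s := by omega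
      simp only [hg', dif_pos hlt]
      exact htileB hs
    · intro u hu
      have hlt : u < s := by omega
      simp only [hf, hg', dif_pos hu, dif_pos hlt]
      exact htilechain u hu
    · intro u hu
      simp only [hf, hg', dif_pos hu]
      exact htlb ⟨u, hu⟩
  have key : iprod x (A i₀) ml *
      (List.ofFn fun u : Fin s => iprod x (A (W u)) (B (W u))).prod *
      iprod x (A' j₀) (B i₀) = iprod x (A i₀) (B i₀) := by
    rw [hmid, iprod_eq_jprod, iprod_eq_jprod, iprod_eq_jprod,
      jprod_append x (by omega) (by omega), jprod_append x (by omega) (by omega)]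
  constructor
  · rintro ⟨hp, hq⟩
    have hG : (List.ofFn fun u : Fin s => iprod x (A (W u)) (B (W u))).prod = g := by
      rw [hg]
      exact congrArg List.prod (congrArg List.ofFn (funext fun u => hp (W u)))
    have hR : iprod x (A' j₀) (B i₀) = (d j₀)⁻¹ := by rw [← h3]; exact hq j₀
    refine ⟨fun i _ => hp i, ?_, hR, hq⟩
    have := key
    rw [hG, hR, hp i₀] at this
    have : iprod x (A i₀) ml * g * (d j₀)⁻¹ * (d j₀ * g⁻¹) = c i₀ * (d j₀ * g⁻¹) := by
      rw [this]
    calc iprod x (A i₀) ml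
        = iprod x (A i₀) ml * g * (d j₀)⁻¹ * (d j₀ * g⁻¹) := by group
      _ = c i₀ * (d j₀ * g⁻¹) := this
      _ = c i₀ * d j₀ * g⁻¹ := by group
  · rintro ⟨hp', hL, hR, hq⟩
    refine ⟨?_, hq⟩
    intro i
    by_cases hi : i = i₀
    · subst hi
      have hG : (List.ofFn fun u : Fin s => iprod x (A (W u)) (B (W u))).prod = g := by
        rw [hg]
        exact congrArg List.prod (congrArg List.ofFn (funext fun u => hp' (W u) (hWne u)))
      rw [← key, hG, hL, hR]
      group
    · exact hp' i hi

end Stmt17
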